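/- Let π = (π₁,…,π_n) and σ = (σ₁,…,σ_m) be curves in ℝ^d equipped with the L₁ norm, and let Q = ∏_{k=1}^{d} [x_k, x'_k] be an axis-parallel box such that for every i ∈ [n], j ∈ [m], k ∈ [d] the value π_i[k] − σ_j[k] does not lie in the open interval (x_k, x'_k). Then the function τ ↦ d_DTW(π, σ+τ) is concave on Q, and hence attains its minimum over Q at one of the 2^d corners of Q. -/

import Mathlib

open Finset

/-- A traversal of two curves of lengths `n` and `m` (1-indexed): a nonempty list of
index pairs starting at `(1,1)`, ending at `(n,m)`, where each step increases the first
index, the second index, or both, by one. -/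
def IsTraversal (n m : ℕ) (T : List (ℕ × ℕ)) : Prop :=
  T.head? = some (1, 1) ∧ T.getLast? = some (n, m) ∧
  ∀ ℓ : ℕ, ℓ + 1 < T.length →
    T.getD (ℓ + 1) (0, 0) = ((T.getD ℓ (0, 0)).1 + 1, (T.getD ℓ (0, 0)).2) ∨
    T.getD (ℓ + 1) (0, 0) = ((T.getD ℓ (0, 0)).1, (T.getD ℓ (0, 0)).2 + 1) ∨
    T.getD (ℓ + 1) (0, 0) = ((T.getD ℓ (0, 0)).1 + 1, (T.getD ℓ (0, 0)).2 + 1)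

/-- The `L₁` norm on `ℝ^d`. -/
def l1norm {d : ℕ} (x : Fin d → ℝ) : ℝ := ∑ k, |x k|

/-- The dynamic time warping distance, with respect to the `L₁` norm on `ℝ^d`, of two
curves `π = (π 1, …, π n)` and `σ = (σ 1, …, σ m)`: the minimum, over all traversals, of
the sum of the `L₁` distances of the paired points. -/
noncomputable def dtwL1 {d : ℕ} (n m : ℕ) (π σ : ℕ → Fin d → ℝ) : ℝ :=
  sInf {c : ℝ | ∃ T : List (ℕ × ℕ), IsTraversal n m T ∧
    (T.map fun p => l1norm (π p.1 - σ p.2)).sum = c}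

lemma getD_of_lt {α : Type*} (l : List α) (i : ℕ) (d : α) (h : i < l.length) :
    l.getD i d = l[i] := by
  simp [List.getD_eq_getElem?_getD, List.getElem?_eq_getElem h]

lemma traversal_ne_nil {n m : ℕ} {T : List (ℕ × ℕ)} (h : IsTraversal n m T) : T ≠ [] := by
  intro he; rw [he] at h; simp [IsTraversal] at h

lemma traversal_getD_zero {n m : ℕ} {T : List (ℕ × ℕ)} (h : IsTraversal n m T) :
    T.getD 0 (0, 0) = (1, 1) := by
  have hne := traversal_ne_nil h
  have h0 : 0 < T.length := List.length_pos_iff.2 hne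
  have := h.1
  rw [List.head?_eq_getElem?, List.getElem?_eq_getElem h0] at this
  rw [getD_of_lt _ _ _ h0]
  exact Option.some.inj this

lemma traversal_getD_last {n m : ℕ} {T : List (ℕ × ℕ)} (h : IsTraversal n m T) :
    T.getD (T.length - 1) (0, 0) = (n, m) := by
  have hne := traversal_ne_nil h
  have h0 : T.length - 1 < T.length := by
    have : 0 < T.length := List.length_pos_iff.2 hne
    omega
  have := h.2.1
  rw [List.getLast?_eq_getElem?, List.getElem?_eq_getElem h0] at this
  rw [getD_of_lt _ _ _ h0]
  exact Option.some.inj this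

lemma traversal_mono {n m : ℕ} {T : List (ℕ × ℕ)} (h : IsTraversal n m T)
    {a b : ℕ} (hab : a ≤ b) (hb : b < T.length) :
    (T.getD a (0, 0)).1 ≤ (T.getD b (0, 0)).1 ∧ (T.getD a (0, 0)).2 ≤ (T.getD b (0, 0)).2 := by
  induction b, hab using Nat.le_induction with
  | base => exact ⟨le_refl _, le_refl _⟩
  | succ b hab ih =>
    obtain ⟨h1, h2⟩ := ih (by omega)
    rcases h.2.2 b hb with he | he | he <;>
      refine ⟨?_, ?_⟩ <;> rw [he] <;> dsimp only <;> omega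

lemma traversal_bounds {n m : ℕ} {T : List (ℕ × ℕ)} (h : IsTraversal n m T)
    {p : ℕ × ℕ} (hp : p ∈ T) : 1 ≤ p.1 ∧ p.1 ≤ n ∧ 1 ≤ p.2 ∧ p.2 ≤ m := by
  obtain ⟨i, hi, rfl⟩ := List.mem_iff_getElem.1 hp
  rw [← getD_of_lt _ _ (0,0) hi]
  have h1 := traversal_mono h (Nat.zero_le i) hi
  have h2 := traversal_mono h (Nat.le_sub_one_of_lt hi) (by omega)
  rw [traversal_getD_zero h] at h1
  rw [traversal_getD_last h] at h2
  exact ⟨h1.1, h2.1, h1.2, h2.2⟩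

lemma traversal_exists {n m : ℕ} (hn : 1 ≤ n) (hm : 1 ≤ m) :
    ∃ T : List (ℕ × ℕ), IsTraversal n m T := by
  classical
  set g : ℕ → ℕ × ℕ := fun ℓ => if ℓ < m then (1, ℓ + 1) else (ℓ - m + 2, m) with hg
  refine ⟨(List.range (m + n - 1)).map g, ?_, ?_, ?_⟩
  · have hlen : 0 < ((List.range (m + n - 1)).map g).length := by simp; omega
    rw [List.head?_eq_getElem?, List.getElem?_eq_getElem hlen]
    simp [g]; omega
  · have hlen : (m + n - 1) - 1 < ((List.range (m + n - 1)).map g).length := by simp; omega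
    rw [List.getLast?_eq_getElem?, List.getElem?_eq_getElem (by simpa using hlen)]
    simp only [List.getElem_map, List.getElem_range]
    rcases Nat.lt_or_ge (m + n - 1 - 1) m with hc | hc
    · have : n = 1 := by omega
      simp [g, hc]; omega
    · simp [g, Nat.not_lt.2 hc]; omega
  · intro ℓ hℓ
    simp only [List.length_map, List.length_range] at hℓ
    rw [getD_of_lt _ _ _ (by simpa using hℓ), getD_of_lt _ _ _ (by simp; omega)]
    simp only [List.getElem_map, List.getElem_range]
    rcases Nat.lt_or_ge (ℓ + 1) m with hc | hc
    · have hl : ℓ < m := by omega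
      right; left; simp [g, hc, hl]
    · rcases Nat.lt_or_ge ℓ m with hc2 | hc2
      · have : ℓ + 1 = m := by omega
        left; simp [g, hc2, Nat.not_lt.2 hc]; omega
      · left; simp [g, Nat.not_lt.2 hc, Nat.not_lt.2 hc2]; omega


lemma abs_combo {c t1 t2 a b xk xk' : ℝ} (hc : c ∉ Set.Ioo xk xk')
    (h1 : t1 ∈ Set.Icc xk xk') (h2 : t2 ∈ Set.Icc xk xk')
    (ha : 0 ≤ a) (hb : 0 ≤ b) (hab : a + b = 1) :
    |c - (a * t1 + b * t2)| = a * |c - t1| + b * |c - t2| := by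
  simp only [Set.mem_Ioo, not_and, not_lt, Set.mem_Icc] at hc h1 h2
  rcases le_or_gt c xk with h | h
  · have hc' : a * c + b * c = c := by linear_combination c * hab
    have k1 : a * c ≤ a * t1 := mul_le_mul_of_nonneg_left (h.trans h1.1) ha
    have k2 : b * c ≤ b * t2 := mul_le_mul_of_nonneg_left (h.trans h2.1) hb
    have k3 : c - (a * t1 + b * t2) ≤ 0 := by linarith
    rw [abs_of_nonpos k3, abs_of_nonpos (by linarith), abs_of_nonpos (by linarith)]
    linear_combination c * hab
  · have h' : xk' ≤ c := hc h
    have hc' : a * c + b * c = c := by linear_combination c * hab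
    have k1 : a * t1 ≤ a * c := mul_le_mul_of_nonneg_left (h1.2.trans h') ha
    have k2 : b * t2 ≤ b * c := mul_le_mul_of_nonneg_left (h2.2.trans h') hb
    have k3 : 0 ≤ c - (a * t1 + b * t2) := by linarith
    rw [abs_of_nonneg k3, abs_of_nonneg (by linarith), abs_of_nonneg (by linarith)]
    linear_combination (-c) * hab

lemma list_sum_combo {α : Type*} (T : List α) (f g h : α → ℝ) (a b : ℝ)
    (H : ∀ p ∈ T, f p = a * g p + b * h p) :
    (T.map f).sum = a * (T.map g).sum + b * (T.map h).sum := by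
  induction T with
  | nil => simp
  | cons p T ih =>
    simp only [List.map_cons, List.sum_cons, H p (by simp),
      ih (fun q hq => H q (by simp [hq]))]
    ring

lemma concave_exists_corner_min {d : ℕ} {x x' : Fin d → ℝ} (hxx : x ≤ x')
    {f : (Fin d → ℝ) → ℝ} (hf : ConcaveOn ℝ (Set.Icc x x') f) :
    ∃ c : Fin d → ℝ, (∀ k, c k = x k ∨ c k = x' k) ∧ ∀ τ ∈ Set.Icc x x', f c ≤ f τ := by
  classical
  have hmemx : ∀ (τ : Fin d → ℝ), τ ∈ Set.Icc x x' → ∀ (k : Fin d) (t : ℝ),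
      t = x k ∨ t = x' k → Function.update τ k t ∈ Set.Icc x x' := by
    intro τ hτ k t ht
    constructor <;> intro j <;> rcases eq_or_ne j k with rfl | hj
    · rcases ht with rfl | rfl
      · simp
      · simp [hxx j]
    · simpa [Function.update_of_ne hj] using hτ.1 j
    · rcases ht with rfl | rfl
      · simp [hxx j]
      · simp
    · simpa [Function.update_of_ne hj] using hτ.2 j
  have step : ∀ (τ : Fin d → ℝ), τ ∈ Set.Icc x x' → ∀ k : Fin d,
      f (Function.update τ k (x k)) ≤ f τ ∨ f (Function.update τ k (x' k)) ≤ f τ := by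
    intro τ hτ k
    have hτ1 : x ≤ τ := hτ.1
    have hτ2 : τ ≤ x' := hτ.2
    rcases eq_or_lt_of_le (hxx k) with heq | hlt
    · left
      have : Function.update τ k (x k) = τ := by
        funext j
        rcases eq_or_ne j k with rfl | hj
        · simp only [Function.update_self]
          exact le_antisymm (hτ1 j) (heq ▸ hτ2 j) |>.symm ▸ rfl
        · simp [Function.update_of_ne hj]
      rw [this]
    · set u := Function.update τ k (x k) with hu
      set v := Function.update τ k (x' k) with hv
      have hum : u ∈ Set.Icc x x' := hmemx τ hτ k _ (Or.inl rfl)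
      have hvm : v ∈ Set.Icc x x' := hmemx τ hτ k _ (Or.inr rfl)
      set a := (x' k - τ k) / (x' k - x k) with ha'
      set b := (τ k - x k) / (x' k - x k) with hb'
      have hd : (0:ℝ) < x' k - x k := by linarith
      have ha : 0 ≤ a := div_nonneg (by linarith [hτ2 k]) hd.le
      have hb : 0 ≤ b := div_nonneg (by linarith [hτ1 k]) hd.le
      have hab : a + b = 1 := by rw [ha', hb']; field_simp; ring
      have hcomb : a • u + b • v = τ := by
        funext j
        rcases eq_or_ne j k with rfl | hj
        · simp only [Pi.add_apply, Pi.smul_apply, smul_eq_mul, hu, hv,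
            Function.update_self, ha', hb']
          field_simp
          ring
        · simp only [Pi.add_apply, Pi.smul_apply, smul_eq_mul, hu, hv,
            Function.update_of_ne hj]
          linear_combination τ j * hab
      have hkey := hf.2 hum hvm ha hb hab
      rw [hcomb] at hkey
      simp only [smul_eq_mul] at hkey
      have hone : a * f u + b * f u = f u := by linear_combination f u * hab
      have hone' : a * f v + b * f v = f v := by linear_combination f v * hab
      rcases le_total (f u) (f v) with h | h
      · left
        have := mul_le_mul_of_nonneg_left h hb
        linarith
      · right
        have := mul_le_mul_of_nonneg_left h ha
        linarith
  have main : ∀ (A : Finset (Fin d)), ∀ τ ∈ Set.Icc x x',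
      ∃ τ' ∈ Set.Icc x x', (∀ k ∈ A, τ' k = x k ∨ τ' k = x' k) ∧ f τ' ≤ f τ := by
    intro A
    induction A using Finset.induction_on with
    | empty => intro τ hτ; exact ⟨τ, hτ, by simp, le_refl _⟩
    | @insert k A hk ih =>
      intro τ hτ
      obtain ⟨τ', hτ', hA, hle⟩ := ih τ hτ
      rcases step τ' hτ' k with h | h
      · refine ⟨Function.update τ' k (x k), hmemx τ' hτ' k _ (Or.inl rfl), ?_, h.trans hle⟩
        intro j hj
        rcases eq_or_ne j k with rfl | hjk
        · simp
        · rw [Function.update_of_ne hjk]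
          exact hA j (Finset.mem_of_mem_insert_of_ne hj hjk)
      · refine ⟨Function.update τ' k (x' k), hmemx τ' hτ' k _ (Or.inr rfl), ?_, h.trans hle⟩
        intro j hj
        rcases eq_or_ne j k with rfl | hjk
        · simp
        · rw [Function.update_of_ne hjk]
          exact hA j (Finset.mem_of_mem_insert_of_ne hj hjk)
  obtain ⟨s₀, -, hs₀⟩ := Finset.exists_min_image Finset.univ
      (fun s : Fin d → Bool => f (fun k => if s k then x' k else x k)) Finset.univ_nonempty
  refine ⟨fun k => if s₀ k then x' k else x k, fun k => ?_, ?_⟩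
  · cases hsk : s₀ k <;> simp [hsk]
  · intro τ hτ
    obtain ⟨τ', hτ'mem, hA, hle⟩ := main Finset.univ τ hτ
    have hex : ∃ s : Fin d → Bool, (fun k => if s k then x' k else x k) = τ' := by
      refine ⟨fun k => decide (τ' k = x' k), funext fun k => ?_⟩
      rcases hA k (Finset.mem_univ k) with h | h
      · by_cases hk : τ' k = x' k
        · simp [hk]
        · simp [hk, h]
          exact fun hxe => hxe.symm
      · simp [h]
    obtain ⟨s, hs⟩ := hex
    calc f (fun k => if s₀ k then x' k else x k)
        ≤ f (fun k => if s k then x' k else x k) := hs₀ s (Finset.mem_univ s)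
      _ = f τ' := by rw [hs]
      _ ≤ f τ := hle

lemma l1norm_combo {d : ℕ} {x x' : Fin d → ℝ} (c τ1 τ2 : Fin d → ℝ)
    (hc : ∀ k, c k ∉ Set.Ioo (x k) (x' k))
    (h1 : τ1 ∈ Set.Icc x x') (h2 : τ2 ∈ Set.Icc x x')
    {a b : ℝ} (ha : 0 ≤ a) (hb : 0 ≤ b) (hab : a + b = 1) :
    l1norm (c - (a • τ1 + b • τ2)) = a * l1norm (c - τ1) + b * l1norm (c - τ2) := by
  unfold l1norm
  rw [Finset.mul_sum, Finset.mul_sum, ← Finset.sum_add_distrib]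
  refine Finset.sum_congr rfl fun k _ => ?_
  have := abs_combo (hc k) (Set.mem_Icc.2 ⟨h1.1 k, h1.2 k⟩) (Set.mem_Icc.2 ⟨h2.1 k, h2.2 k⟩)
    ha hb hab
  simpa [Pi.sub_apply, Pi.add_apply, Pi.smul_apply, smul_eq_mul] using this

/-- If, for all `i ∈ [n]`, `j ∈ [m]` and coordinates `k`, the value `π_i[k] - σ_j[k]` does
not lie in the open interval `(x_k, x'_k)`, then `τ ↦ d_DTW(π, σ + τ)` (w.r.t. the `L₁`
norm) is concave on the box `Q = ∏ₖ [x_k, x'_k]` and attains its minimum over `Q` at one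
of the corners of `Q`. -/
theorem dtwL1_concave_on_cell (d n m : ℕ) (hn : 1 ≤ n) (hm : 1 ≤ m)
    (π σ : ℕ → Fin d → ℝ) (x x' : Fin d → ℝ) (hxx : x ≤ x')
    (hgrid : ∀ i ∈ Finset.Icc 1 n, ∀ j ∈ Finset.Icc 1 m, ∀ k : Fin d,
      π i k - σ j k ∉ Set.Ioo (x k) (x' k)) :
    ConcaveOn ℝ (Set.Icc x x') (fun τ => dtwL1 n m π (fun j => σ j + τ)) ∧
    ∃ c : Fin d → ℝ, (∀ k : Fin d, c k = x k ∨ c k = x' k) ∧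
      ∀ τ ∈ Set.Icc x x',
        dtwL1 n m π (fun j => σ j + c) ≤ dtwL1 n m π (fun j => σ j + τ) := by
  classical
  set f : (Fin d → ℝ) → ℝ := fun τ => dtwL1 n m π (fun j => σ j + τ) with hfdef
  have hset : ∀ τ : Fin d → ℝ, f τ = sInf {c : ℝ | ∃ T : List (ℕ × ℕ), IsTraversal n m T ∧
      (T.map fun p => l1norm (π p.1 - (σ p.2 + τ))).sum = c} := fun τ => rfl
  have hne : ∀ τ : Fin d → ℝ, ({c : ℝ | ∃ T : List (ℕ × ℕ), IsTraversal n m T ∧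
      (T.map fun p => l1norm (π p.1 - (σ p.2 + τ))).sum = c}).Nonempty := by
    intro τ
    obtain ⟨T, hT⟩ := traversal_exists hn hm
    exact ⟨_, T, hT, rfl⟩
  have hbdd : ∀ τ : Fin d → ℝ, BddBelow {c : ℝ | ∃ T : List (ℕ × ℕ), IsTraversal n m T ∧
      (T.map fun p => l1norm (π p.1 - (σ p.2 + τ))).sum = c} := by
    intro τ
    refine ⟨0, ?_⟩
    rintro c ⟨T, hT, rfl⟩
    apply List.sum_nonneg
    intro y hy
    obtain ⟨p, hp, rfl⟩ := List.mem_map.1 hy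
    exact Finset.sum_nonneg fun k _ => abs_nonneg _
  have hcost : ∀ (T : List (ℕ × ℕ)), IsTraversal n m T →
      ∀ τ1 ∈ Set.Icc x x', ∀ τ2 ∈ Set.Icc x x', ∀ a b : ℝ, 0 ≤ a → 0 ≤ b → a + b = 1 →
      (T.map fun p => l1norm (π p.1 - (σ p.2 + (a • τ1 + b • τ2)))).sum =
        a * (T.map fun p => l1norm (π p.1 - (σ p.2 + τ1))).sum +
        b * (T.map fun p => l1norm (π p.1 - (σ p.2 + τ2))).sum := by
    intro T hT τ1 hτ1 τ2 hτ2 a b ha hb hab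
    apply list_sum_combo
    intro p hp
    obtain ⟨hp1, hp2, hp3, hp4⟩ := traversal_bounds hT hp
    have hc : ∀ k : Fin d, (π p.1 - σ p.2) k ∉ Set.Ioo (x k) (x' k) := fun k =>
      hgrid p.1 (Finset.mem_Icc.2 ⟨hp1, hp2⟩) p.2 (Finset.mem_Icc.2 ⟨hp3, hp4⟩) k
    have e1 : π p.1 - (σ p.2 + (a • τ1 + b • τ2)) = (π p.1 - σ p.2) - (a • τ1 + b • τ2) :=
      sub_add_eq_sub_sub _ _ _
    have e2 : π p.1 - (σ p.2 + τ1) = (π p.1 - σ p.2) - τ1 := sub_add_eq_sub_sub _ _ _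
    have e3 : π p.1 - (σ p.2 + τ2) = (π p.1 - σ p.2) - τ2 := sub_add_eq_sub_sub _ _ _
    rw [e1, e2, e3]
    exact l1norm_combo _ _ _ hc hτ1 hτ2 ha hb hab
  have hconc : ConcaveOn ℝ (Set.Icc x x') f := by
    refine ⟨convex_Icc x x', ?_⟩
    intro τ1 hτ1 τ2 hτ2 a b ha hb hab
    rw [hset]
    refine le_csInf (hne _) ?_
    rintro c ⟨T, hT, rfl⟩
    rw [hcost T hT τ1 hτ1 τ2 hτ2 a b ha hb hab]
    have g1 : f τ1 ≤ (T.map fun p => l1norm (π p.1 - (σ p.2 + τ1))).sum :=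
      csInf_le (hbdd _) ⟨T, hT, rfl⟩
    have g2 : f τ2 ≤ (T.map fun p => l1norm (π p.1 - (σ p.2 + τ2))).sum :=
      csInf_le (hbdd _) ⟨T, hT, rfl⟩
    simp only [smul_eq_mul]
    exact add_le_add (mul_le_mul_of_nonneg_left g1 ha) (mul_le_mul_of_nonneg_left g2 hb)
  obtain ⟨c, hc, hcmin⟩ := concave_exists_corner_min hxx hconc
  exact ⟨hconc, c, hc, hcmin⟩
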